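/- Let s, t be positive integers, p ∈ ℂ, q ∈ ℂ with q ≠ 0, v > 0, and f(z) = z^{s+t} + p z^t + q. Define γ : ℝ → ℂ, γ(φ) = v^s·e^{i·s·φ} + |q|·v^{−t}·e^{i·(arg(q) − t·φ)}. Then f has a root of multiplicity at least 2 of norm v if and only if there exists φ ∈ [0, 2π) with γ(φ) = −p and γ′(φ) = 0, where γ′ is the derivative of γ with respect to φ (i.e., −p is a cusp of the curve γ). -/

import Mathlib

open Polynomial


lemma deriv_gamma (s t : ℕ) (q : ℂ) (v : ℝ) (φ : ℝ) :
    deriv (fun φ : ℝ => (v : ℂ) ^ s * Complex.exp (Complex.I * s * φ)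
      + (‖q‖ : ℂ) * (v : ℂ) ^ (-(t : ℤ)) *
          Complex.exp (Complex.I * ((q.arg : ℂ) - t * φ))) φ
    = Complex.I * s * ((v : ℂ) ^ s * Complex.exp (Complex.I * s * φ))
      - Complex.I * t * ((‖q‖ : ℂ) * (v : ℂ) ^ (-(t : ℤ)) *
          Complex.exp (Complex.I * ((q.arg : ℂ) - t * φ))) := by
  have hco : HasDerivAt (fun φ : ℝ => (φ : ℂ)) 1 φ := by
    simpa using (hasDerivAt_id φ).ofReal_comp
  have h1 : HasDerivAt (fun φ : ℝ => Complex.exp (Complex.I * s * φ))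
      (Complex.I * s * Complex.exp (Complex.I * s * φ)) φ := by
    have := (hco.const_mul (Complex.I * s)).cexp
    simpa [mul_comm] using this
  have h2 : HasDerivAt (fun φ : ℝ => Complex.exp (Complex.I * ((q.arg : ℂ) - t * φ)))
      (-(Complex.I * t) * Complex.exp (Complex.I * ((q.arg : ℂ) - t * φ))) φ := by
    have hin : HasDerivAt (fun φ : ℝ => Complex.I * ((q.arg : ℂ) - t * φ))
        (-(Complex.I * t)) φ := by
      have := ((hco.const_mul (t : ℂ)).const_sub (q.arg : ℂ)).const_mul Complex.I
      simpa using this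
    have := hin.cexp
    simpa [mul_comm] using this
  have H := (h1.const_mul ((v : ℂ) ^ s)).add
    (h2.const_mul ((‖q‖ : ℂ) * (v : ℂ) ^ (-(t : ℤ))))
  refine H.deriv.trans ?_
  ring

lemma key_equiv (s t : ℕ) (hs : 0 < s) (ht : 0 < t) (p q : ℂ) (hq : q ≠ 0)
    (v : ℝ) (hv : 0 < v) (φ : ℝ) (a : ℂ)
    (ha : a = (v : ℂ) * Complex.exp (Complex.I * φ)) :
    ((a ^ (s + t) + p * a ^ t + q = 0 ∧
        ((s : ℂ) + t) * a ^ (s + t - 1) + p * (t * a ^ (t - 1)) = 0) ↔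
      ((v : ℂ) ^ s * Complex.exp (Complex.I * s * φ)
          + (‖q‖ : ℂ) * (v : ℂ) ^ (-(t : ℤ)) *
            Complex.exp (Complex.I * ((q.arg : ℂ) - t * φ)) = -p ∧
        Complex.I * s * ((v : ℂ) ^ s * Complex.exp (Complex.I * s * φ))
          - Complex.I * t * ((‖q‖ : ℂ) * (v : ℂ) ^ (-(t : ℤ)) *
            Complex.exp (Complex.I * ((q.arg : ℂ) - t * φ))) = 0)) := by
  have hvz : (v : ℂ) ≠ 0 := by exact_mod_cast hv.ne'
  have ha0 : a ≠ 0 := by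
    rw [ha]; exact mul_ne_zero hvz (Complex.exp_ne_zero _)
  have hat' : a ^ t ≠ 0 := pow_ne_zero _ ha0
  have hE1 : (v : ℂ) ^ s * Complex.exp (Complex.I * s * φ) = a ^ s := by
    rw [ha, mul_pow, ← Complex.exp_nat_mul]
    congr 2
    ring
  have hatv : a ^ t = (v : ℂ) ^ t * Complex.exp (Complex.I * t * φ) := by
    rw [ha, mul_pow, ← Complex.exp_nat_mul]
    congr 2
    ring
  have hE2 : (‖q‖ : ℂ) * (v : ℂ) ^ (-(t : ℤ)) *
      Complex.exp (Complex.I * ((q.arg : ℂ) - t * φ)) * a ^ t = q := by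
    rw [hatv]
    have h1 : (v : ℂ) ^ (-(t : ℤ)) * (v : ℂ) ^ t = 1 := by
      rw [zpow_neg, zpow_natCast]
      field_simp
    have h2 : Complex.exp (Complex.I * ((q.arg : ℂ) - t * φ)) *
        Complex.exp (Complex.I * t * φ) = Complex.exp ((q.arg : ℂ) * Complex.I) := by
      rw [← Complex.exp_add]; congr 1; ring
    calc (‖q‖ : ℂ) * (v : ℂ) ^ (-(t : ℤ)) *
          Complex.exp (Complex.I * ((q.arg : ℂ) - t * φ)) *
          ((v : ℂ) ^ t * Complex.exp (Complex.I * t * φ))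
        = (‖q‖ : ℂ) * (Complex.exp (Complex.I * ((q.arg : ℂ) - t * φ)) *
            Complex.exp (Complex.I * t * φ)) * ((v : ℂ) ^ (-(t : ℤ)) * (v : ℂ) ^ t) := by
          ring
      _ = q := by rw [h1, h2, mul_one, Complex.norm_mul_exp_arg_mul_I]
  have h1a : a ^ (s + t - 1) * a = a ^ (s + t) := by
    rw [← pow_succ]; congr 1; omega
  have h2a : a ^ (t - 1) * a = a ^ t := by
    rw [← pow_succ]; congr 1; omega
  set Q : ℂ := (‖q‖ : ℂ) * (v : ℂ) ^ (-(t : ℤ)) *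
      Complex.exp (Complex.I * ((q.arg : ℂ) - t * φ)) with hQ
  rw [hE1]
  constructor
  · rintro ⟨hP1, hP2⟩
    have hKey : (s : ℂ) * a ^ (s + t) - t * q = 0 := by
      linear_combination a * hP2 - ((s : ℂ) + t) * h1a - p * (t : ℂ) * h2a - (t : ℂ) * hP1
    constructor
    · have hz : (a ^ s + Q + p) * a ^ t = 0 := by
        linear_combination hP1 + hE2
      have := (mul_eq_zero.mp hz).resolve_right hat'
      linear_combination this
    · have hz : (Complex.I * s * a ^ s - Complex.I * t * Q) * a ^ t = 0 := by
        linear_combination Complex.I * hKey - Complex.I * (t : ℂ) * hE2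
      exact (mul_eq_zero.mp hz).resolve_right hat'
  · rintro ⟨hG1, hG2⟩
    have h3 : Complex.I * ((s : ℂ) * a ^ (s + t) - t * q) = 0 := by
      linear_combination a ^ t * hG2 + Complex.I * (t : ℂ) * hE2
    have hKey : (s : ℂ) * a ^ (s + t) - t * q = 0 :=
      (mul_eq_zero.mp h3).resolve_left Complex.I_ne_zero
    have hP1 : a ^ (s + t) + p * a ^ t + q = 0 := by
      linear_combination a ^ t * hG1 - hE2
    refine ⟨hP1, ?_⟩
    have hz : (((s : ℂ) + t) * a ^ (s + t - 1) + p * (t * a ^ (t - 1))) * a = 0 := by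
      linear_combination ((s : ℂ) + t) * h1a + p * (t : ℂ) * h2a + hKey + (t : ℂ) * hP1
    exact (mul_eq_zero.mp hz).resolve_right ha0

/-- The trinomial `f = z^(s+t) + p z^t + q` has a root of multiplicity at least
two of norm `v` if and only if `-p` is a cusp of the associated hypotrochoid
`γ(φ) = v^s e^(isφ) + |q| v^(-t) e^(i(arg q - tφ))`, i.e. there is
`φ ∈ [0, 2π)` with `γ(φ) = -p` and `γ'(φ) = 0`. -/
theorem double_root_iff_cusp (s t : ℕ) (hs : 0 < s) (ht : 0 < t)
    (p q : ℂ) (hq : q ≠ 0) (v : ℝ) (hv : 0 < v) (γ : ℝ → ℂ)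
    (hγ : γ = fun φ : ℝ => (v : ℂ) ^ s * Complex.exp (Complex.I * s * φ)
      + (‖q‖ : ℂ) * (v : ℂ) ^ (-(t : ℤ)) *
          Complex.exp (Complex.I * ((q.arg : ℂ) - t * φ))) :
    (∃ a : ℂ, (X ^ (s + t) + C p * X ^ t + C q : Polynomial ℂ).eval a = 0 ∧
      (derivative (X ^ (s + t) + C p * X ^ t + C q : Polynomial ℂ)).eval a = 0 ∧
      ‖a‖ = v) ↔
    (∃ φ ∈ Set.Ico (0 : ℝ) (2 * Real.pi), γ φ = -p ∧ deriv γ φ = 0) := by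
  subst hγ
  have hev : ∀ a : ℂ, (X ^ (s + t) + C p * X ^ t + C q : Polynomial ℂ).eval a
      = a ^ (s + t) + p * a ^ t + q := fun a => by simp
  have hdv : ∀ a : ℂ, (derivative (X ^ (s + t) + C p * X ^ t + C q : Polynomial ℂ)).eval a
      = ((s : ℂ) + t) * a ^ (s + t - 1) + p * (t * a ^ (t - 1)) := fun a => by
    simp [derivative_X_pow]
  constructor
  · rintro ⟨a, h1, h2, h3⟩
    rw [hev] at h1
    rw [hdv] at h2
    have ha0 : a ≠ 0 := by
      intro h
      apply hq
      simpa [h, zero_pow, hs.ne', ht.ne', (by omega : s + t ≠ 0)] using h1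
    have haθ : a = (v : ℂ) * Complex.exp (Complex.I * (a.arg : ℂ)) := by
      rw [mul_comm Complex.I, ← h3]
      exact (Complex.norm_mul_exp_arg_mul_I a).symm
    set φ := if 0 ≤ a.arg then a.arg else a.arg + 2 * Real.pi with hφ
    have hmem : φ ∈ Set.Ico (0 : ℝ) (2 * Real.pi) := by
      simp only [Set.mem_Ico, hφ]
      split_ifs with h0 <;> constructor <;>
        linarith [Real.pi_pos, Complex.arg_le_pi a, Complex.neg_pi_lt_arg a]
    have haφ : a = (v : ℂ) * Complex.exp (Complex.I * (φ : ℝ)) := by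
      by_cases h0 : 0 ≤ a.arg
      · rw [hφ]; rw [if_pos h0]; exact haθ
      · rw [hφ]; rw [if_neg h0]
        conv_lhs => rw [haθ]
        congr 1
        push_cast
        rw [show Complex.I * ((a.arg : ℂ) + 2 * (Real.pi : ℂ))
            = Complex.I * (a.arg : ℂ) + 2 * (Real.pi : ℂ) * Complex.I from by ring,
          Complex.exp_add, Complex.exp_two_pi_mul_I, mul_one]
    have hK := (key_equiv s t hs ht p q hq v hv φ a haφ).mp ⟨h1, h2⟩
    exact ⟨φ, hmem, hK.1, by rw [deriv_gamma]; exact hK.2⟩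
  · rintro ⟨φ, hmem, hG1, hG2⟩
    rw [deriv_gamma] at hG2
    have hK := (key_equiv s t hs ht p q hq v hv φ
      ((v : ℂ) * Complex.exp (Complex.I * φ)) rfl).mpr ⟨hG1, hG2⟩
    refine ⟨(v : ℂ) * Complex.exp (Complex.I * φ), ?_, ?_, ?_⟩
    · rw [hev]; exact hK.1
    · rw [hdv]; exact hK.2
    · simp [Complex.norm_exp, abs_of_pos hv]
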